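/- Let k ≥ 9 be odd. Then Pol(C_k, C_3) contains an Olšák function, i.e., a 6-ary polymorphism o: C_k^6 → C_3 satisfying o(x,x,y,y,y,x) = o(x,y,x,y,x,y) = o(y,x,x,x,y,y) for all vertices x, y of C_k. Concretely, one may take o(x_1,...,x_6) = h_k((x_1 + x_2 + x_3) mod k) where h_k is a suitable 3-colouring of the auxiliary graph D_k with N = 3. -/
import Mathlib


/-- Adjacency in the `m`-cycle on vertex set `ZMod m`. -/
def CycAdj (m : ℕ) (u v : ZMod m) : Prop := v = u + 1 ∨ v = u - 1

/-- The colouring of the auxiliary graph: mostly alternating `0,1`, with a special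
tail `2,1,2,0,2` on the last five vertices. -/
def olsF (k n : ℕ) : ZMod 3 :=
  if n = k-5 then 2 else if n = k-4 then 1 else if n = k-3 then 2
  else if n = k-2 then 0 else if n = k-1 then 2 else ((n % 2 : ℕ) : ZMod 3)

lemma olsF_body (k n : ℕ) (hk : 9 ≤ k) (h : n ≤ k - 6) :
    olsF k n = ((n % 2 : ℕ) : ZMod 3) := by
  unfold olsF
  rw [if_neg (by omega), if_neg (by omega), if_neg (by omega),
      if_neg (by omega), if_neg (by omega)]

lemma olsModk (k a b : ℕ) (h : a = b ∧ b < k ∨ a = k + b ∧ b < k) : a % k = b := by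
  rcases h with ⟨rfl, hb⟩ | ⟨rfl, hb⟩
  · exact Nat.mod_eq_of_lt hb
  · rw [Nat.add_mod_left]; exact Nat.mod_eq_of_lt hb

lemma olsF_key (k : ℕ) (hk : 9 ≤ k) (hodd : k % 2 = 1) (n : ℕ) (hn : n < k)
    (d : ℕ) (hd : d = 1 ∨ d = 3) : olsF k n ≠ olsF k ((n + d) % k) := by
  have e5 : olsF k (k-5) = 2 := by unfold olsF; rw [if_pos rfl]
  have e4 : olsF k (k-4) = 1 := by unfold olsF; rw [if_neg (by omega), if_pos rfl]
  have e3 : olsF k (k-3) = 2 := by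
    unfold olsF; rw [if_neg (by omega), if_neg (by omega), if_pos rfl]
  have e2 : olsF k (k-2) = 0 := by
    unfold olsF; rw [if_neg (by omega), if_neg (by omega), if_neg (by omega), if_pos rfl]
  have e1 : olsF k (k-1) = 2 := by
    unfold olsF; rw [if_neg (by omega), if_neg (by omega), if_neg (by omega),
      if_neg (by omega), if_pos rfl]
  rcases hd with rfl | rfl
  · -- d = 1
    rcases (by omega : n = k-1 ∨ n = k-2 ∨ n = k-3 ∨ n = k-4 ∨ n = k-5 ∨ n = k-6 ∨ n ≤ k-7)
      with h|h|h|h|h|h|h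
    · subst h
      rw [(olsModk k _ 0 (by omega) : (k-1+1) % k = 0), e1, olsF_body k 0 hk (by omega)]
      decide
    · subst h
      rw [(olsModk k _ (k-1) (by omega) : (k-2+1) % k = k-1), e2, e1]; decide
    · subst h
      rw [(olsModk k _ (k-2) (by omega) : (k-3+1) % k = k-2), e3, e2]; decide
    · subst h
      rw [(olsModk k _ (k-3) (by omega) : (k-4+1) % k = k-3), e4, e3]; decide
    · subst h
      rw [(olsModk k _ (k-4) (by omega) : (k-5+1) % k = k-4), e5, e4]; decide
    · subst h
      rw [(olsModk k _ (k-5) (by omega) : (k-6+1) % k = k-5), e5, olsF_body k (k-6) hk (by omega),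
          (by omega : (k-6) % 2 = 1)]
      decide
    · rw [(olsModk k _ (n+1) (by omega) : (n+1) % k = n+1), olsF_body k n hk (by omega),
          olsF_body k (n+1) hk (by omega)]
      rcases (by omega : n % 2 = 0 ∧ (n+1) % 2 = 1 ∨ n % 2 = 1 ∧ (n+1) % 2 = 0)
        with ⟨ha, hb⟩ | ⟨ha, hb⟩ <;> rw [ha, hb] <;> decide
  · -- d = 3
    rcases (by omega : n = k-1 ∨ n = k-2 ∨ n = k-3 ∨ n = k-4 ∨ n = k-5 ∨ n = k-6 ∨
        n = k-7 ∨ n = k-8 ∨ n ≤ k-9) with h|h|h|h|h|h|h|h|h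
    · subst h
      rw [(olsModk k _ 2 (by omega) : (k-1+3) % k = 2), e1, olsF_body k 2 hk (by omega)]
      decide
    · subst h
      rw [(olsModk k _ 1 (by omega) : (k-2+3) % k = 1), e2, olsF_body k 1 hk (by omega)]
      decide
    · subst h
      rw [(olsModk k _ 0 (by omega) : (k-3+3) % k = 0), e3, olsF_body k 0 hk (by omega)]
      decide
    · subst h
      rw [(olsModk k _ (k-1) (by omega) : (k-4+3) % k = k-1), e4, e1]; decide
    · subst h
      rw [(olsModk k _ (k-2) (by omega) : (k-5+3) % k = k-2), e5, e2]; decide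
    · subst h
      rw [(olsModk k _ (k-3) (by omega) : (k-6+3) % k = k-3), e3, olsF_body k (k-6) hk (by omega),
          (by omega : (k-6) % 2 = 1)]
      decide
    · subst h
      rw [(olsModk k _ (k-4) (by omega) : (k-7+3) % k = k-4), e4, olsF_body k (k-7) hk (by omega),
          (by omega : (k-7) % 2 = 0)]
      decide
    · subst h
      rw [(olsModk k _ (k-5) (by omega) : (k-8+3) % k = k-5), e5, olsF_body k (k-8) hk (by omega),
          (by omega : (k-8) % 2 = 1)]
      decide
    · rw [(olsModk k _ (n+3) (by omega) : (n+3) % k = n+3), olsF_body k n hk (by omega),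
          olsF_body k (n+3) hk (by omega)]
      rcases (by omega : n % 2 = 0 ∧ (n+3) % 2 = 1 ∨ n % 2 = 1 ∧ (n+3) % 2 = 0)
        with ⟨ha, hb⟩ | ⟨ha, hb⟩ <;> rw [ha, hb] <;> decide

theorem olsak_exists (k : ℕ) (hk : 9 ≤ k) (hkodd : Odd k) :
    ∃ o : (Fin 6 → ZMod k) → ZMod 3,
      (∀ x y : Fin 6 → ZMod k, (∀ i, CycAdj k (x i) (y i)) → o x ≠ o y) ∧
      ∀ x y : ZMod k,
        o ![x, x, y, y, y, x] = o ![x, y, x, y, x, y] ∧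
        o ![x, y, x, y, x, y] = o ![y, x, x, x, y, y] := by
  haveI : NeZero k := ⟨by omega⟩
  have hodd : k % 2 = 1 := Nat.odd_iff.mp hkodd
  -- the step lemma in ZMod form
  have hstep : ∀ (u : ZMod k) (d : ℕ), (d = 1 ∨ d = 3) →
      olsF k u.val ≠ olsF k (u + (d : ZMod k)).val := by
    intro u d hd
    have hdk : d < k := by omega
    have : (u + (d : ZMod k)).val = (u.val + d) % k := by
      rw [ZMod.val_add, ZMod.val_natCast, Nat.mod_eq_of_lt hdk]
    rw [this]
    exact olsF_key k hk hodd u.val (ZMod.val_lt u) d hd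
  have hdiff : ∀ a b : ZMod k,
      (b = a + 1 ∨ b = a + 3 ∨ a = b + 1 ∨ a = b + 3) →
      olsF k a.val ≠ olsF k b.val := by
    intro a b hab
    have c1 : (1 : ZMod k) = ((1 : ℕ) : ZMod k) := by norm_cast
    have c3 : (3 : ZMod k) = ((3 : ℕ) : ZMod k) := by norm_cast
    rcases hab with h|h|h|h
    · rw [h, c1]; exact hstep a 1 (Or.inl rfl)
    · rw [h, c3]; exact hstep a 3 (Or.inr rfl)
    · rw [h, c1]; exact (hstep b 1 (Or.inl rfl)).symm
    · rw [h, c3]; exact (hstep b 3 (Or.inr rfl)).symm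
  refine ⟨fun v => olsF k (v 0 + v 1 + v 2).val, ?_, ?_⟩
  · intro x y hxy
    have h0 := hxy 0
    have h1 := hxy 1
    have h2 := hxy 2
    unfold CycAdj at h0 h1 h2
    apply hdiff
    rcases h0 with e0|e0 <;> rcases h1 with e1|e1 <;> rcases h2 with e2|e2 <;>
      rw [e0, e1, e2]
    · right; left; ring
    · left; ring
    · left; ring
    · right; right; left; ring
    · left; ring
    · right; right; left; ring
    · right; right; left; ring
    · right; right; right; ring
  · intro x y
    constructor <;>
      · simp only [Matrix.cons_val_zero, Matrix.cons_val_one, Matrix.head_cons,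
          Matrix.cons_val_two, Matrix.tail_cons]
        ring_nf
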